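/- Let G be a strongly connected digraph. For any divisor f : V → ℤ on G, rank(f) = dist(d⁺ − 1 − f) − 1, where d⁺ is the outdegree vector and 1 is the all-ones vector. -/
import Mathlib
set_option linter.unusedSectionVars false


open Finset

variable {V : Type} [Fintype V] [DecidableEq V]

/-- The outdegree of a vertex `v` in the multidigraph with multiplicity function `m`
(`m u v` is the number of directed edges from `u` to `v`). -/
def outdeg (m : V → V → ℕ) (v : V) : ℤ := ∑ u, (m v u : ℤ)

/-- The indegree of a vertex. -/
def indeg (m : V → V → ℕ) (v : V) : ℤ := ∑ u, (m u v : ℤ)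

/-- The digraph is loopless. -/
def Loopless (m : V → V → ℕ) : Prop := ∀ v, m v v = 0

/-- The digraph is strongly connected: every vertex reaches every vertex on a directed path. -/
def StronglyConnected (m : V → V → ℕ) : Prop :=
  ∀ u v : V, Relation.ReflTransGen (fun a b => 0 < m a b) u v

/-- Firing vertex `v` in chip-distribution `x`: `v` sends a chip along each outgoing edge. -/
def fire (m : V → V → ℕ) (x : V → ℤ) (v : V) : V → ℤ :=
  fun u => x u + (m v u : ℤ) - (if u = v then outdeg m v else 0)

/-- The degree (total number of chips) of a chip-distribution / divisor. -/
def degSum (x : V → ℤ) : ℤ := ∑ v, x v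

/-- The state of the chip-firing game after `n` steps, starting from `x` and
firing the vertices `s 0, s 1, …` in this order. -/
def gameState (m : V → V → ℕ) (x : V → ℤ) (s : ℕ → V) : ℕ → (V → ℤ)
  | 0 => x
  | n + 1 => fire m (gameState m x s n) (s n)

/-- `s` encodes an infinite legal chip-firing game starting from `x`:
at each step the fired vertex is active. -/
def InfGame (m : V → V → ℕ) (x : V → ℤ) (s : ℕ → V) : Prop :=
  ∀ n, outdeg m (s n) ≤ gameState m x s n (s n)

/-- A chip-distribution is terminating if no infinite legal game starts from it. -/
def Terminating (m : V → V → ℕ) (x : V → ℤ) : Prop :=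
  ¬ ∃ s : ℕ → V, InfGame m x s

/-- The Laplacian of the digraph applied to `z`. -/
def lap (m : V → V → ℕ) (z : V → ℤ) : V → ℤ :=
  fun u => (∑ v, (m v u : ℤ) * z v) - outdeg m u * z u

/-- Linear equivalence: `x ∼ y` iff `x = y + L z` for some integer vector `z`. -/
def LinEquiv (m : V → V → ℕ) (x y : V → ℤ) : Prop :=
  ∃ z : V → ℤ, x = y + lap m z

/-- The distance of `x` from the non-terminating distributions:
the minimum degree of a nonnegative `y` such that `x + y` is non-terminating. -/
noncomputable def chipDist (m : V → V → ℕ) (x : V → ℤ) : ℕ :=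
  sInf {n : ℕ | ∃ y : V → ℤ, 0 ≤ y ∧ degSum y = (n : ℤ) ∧ ¬ Terminating m (x + y)}

/-- A divisor is equi-effective if it is linearly equivalent to an effective divisor. -/
def EquiEffective (m : V → V → ℕ) (f : V → ℤ) : Prop :=
  ∃ g : V → ℤ, 0 ≤ g ∧ LinEquiv m f g

/-- The rank of a divisor `f`:
`min {deg g - 1 : g ≥ 0 and f - g is not equi-effective}`. -/
noncomputable def divRank (m : V → V → ℕ) (f : V → ℤ) : ℤ :=
  sInf {d : ℤ | ∃ g : V → ℤ, 0 ≤ g ∧ degSum g - 1 = d ∧ ¬ EquiEffective m (f - g)}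

section ChipFiringAux

def delta (v : V) : V → ℤ := fun u => if u = v then 1 else 0

lemma lap_add (m : V → V → ℕ) (a b : V → ℤ) : lap m (a + b) = lap m a + lap m b := by
  funext u
  simp only [lap, Pi.add_apply, mul_add]
  rw [Finset.sum_add_distrib]; ring

lemma lap_sub (m : V → V → ℕ) (a b : V → ℤ) :
    lap m (fun v => a v - b v) = fun u => lap m a u - lap m b u := by
  funext u
  simp only [lap, mul_sub]
  rw [Finset.sum_sub_distrib]; ring

lemma lap_zero (m : V → V → ℕ) : lap m (0 : V → ℤ) = 0 := by
  funext u; simp [lap]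

lemma lap_delta (m : V → V → ℕ) (v u : V) :
    lap m (delta v) u = (m v u : ℤ) - (if u = v then outdeg m v else 0) := by
  simp only [lap, delta, mul_ite, mul_one, mul_zero]
  rw [Finset.sum_ite_eq' Finset.univ v (fun w => (m w u : ℤ)), if_pos (mem_univ v)]
  by_cases h : u = v
  · subst h; simp
  · simp [h]

lemma fire_eq (m : V → V → ℕ) (y : V → ℤ) (v : V) : fire m y v = y + lap m (delta v) := by
  funext u
  rw [Pi.add_apply, lap_delta]
  simp only [fire]; ring

lemma degSum_lap (m : V → V → ℕ) (z : V → ℤ) : degSum (lap m z) = 0 := by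
  simp only [degSum, lap, Finset.sum_sub_distrib]
  rw [Finset.sum_comm]
  have : ∀ v : V, ∑ u, (m v u : ℤ) * z v = outdeg m v * z v := by
    intro v; rw [outdeg, Finset.sum_mul]
  simp only [this]
  ring

lemma degSum_add (x y : V → ℤ) : degSum (x + y) = degSum x + degSum y := by
  simp [degSum, Finset.sum_add_distrib]

lemma degSum_fire (m : V → V → ℕ) (y : V → ℤ) (v : V) : degSum (fire m y v) = degSum y := by
  rw [fire_eq, degSum_add, degSum_lap, add_zero]

def cnt (s : ℕ → V) (n : ℕ) : V → ℤ :=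
  fun v => (((Finset.range n).filter (fun k => s k = v)).card : ℤ)

lemma cnt_zero (s : ℕ → V) : cnt s 0 = 0 := by
  funext v; simp [cnt]

lemma cnt_succ (s : ℕ → V) (n : ℕ) : cnt s (n+1) = cnt s n + delta (s n) := by
  funext v
  simp only [cnt, Pi.add_apply, delta, Finset.range_add_one, Finset.filter_insert]
  by_cases h : s n = v
  · rw [if_pos h, Finset.card_insert_of_notMem (by simp), if_pos (h.symm)]
    push_cast; ring
  · rw [if_neg h, if_neg (fun hh => h hh.symm), add_zero]

lemma cnt_nonneg (s : ℕ → V) (n : ℕ) (v : V) : 0 ≤ cnt s n v := Int.natCast_nonneg _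

lemma cnt_mono (s : ℕ → V) {i j : ℕ} (h : i ≤ j) (v : V) : cnt s i v ≤ cnt s j v := by
  simp only [cnt, Nat.cast_le]
  exact Finset.card_le_card (Finset.filter_subset_filter _ (Finset.range_subset_range.2 h))

lemma cnt_sum (s : ℕ → V) (n : ℕ) : ∑ v, cnt s n v = (n : ℤ) := by
  have h := Finset.card_eq_sum_card_fiberwise
    (s := Finset.range n) (t := Finset.univ) (f := s) (fun x _ => mem_univ _)
  simp only [cnt]
  rw [← Nat.cast_sum, ← h, Finset.card_range]

lemma gameState_eq_cnt (m : V → V → ℕ) (x : V → ℤ) (s : ℕ → V) :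
    ∀ n, gameState m x s n = x + lap m (cnt s n) := by
  intro n
  induction n with
  | zero => rw [cnt_zero, lap_zero, add_zero]; rfl
  | succ k ih =>
    show fire m (gameState m x s k) (s k) = _
    rw [ih, fire_eq, cnt_succ, lap_add, add_assoc]

lemma degSum_gameState (m : V → V → ℕ) (x : V → ℤ) (s : ℕ → V) (n : ℕ) :
    degSum (gameState m x s n) = degSum x := by
  rw [gameState_eq_cnt, degSum_add, degSum_lap, add_zero]

noncomputable def buildSeq (m : V → V → ℕ) (P : (V → ℤ) → Prop)
    (h : ∀ y, P y → ∃ v, outdeg m v ≤ y v ∧ P (fire m y v)) (x : V → ℤ) (hx : P x) :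
    ℕ → {y : V → ℤ // P y}
  | 0 => ⟨x, hx⟩
  | n + 1 =>
      let y := buildSeq m P h x hx n
      ⟨fire m y.1 (h y.1 y.2).choose, (h y.1 y.2).choose_spec.2⟩

lemma build_infgame (m : V → V → ℕ) {P : (V → ℤ) → Prop} {x : V → ℤ} (hx : P x)
    (h : ∀ y, P y → ∃ v, outdeg m v ≤ y v ∧ P (fire m y v)) :
    ¬ Terminating m x := by
  rw [Terminating, not_not]
  set st := buildSeq m P h x hx with hst
  set s : ℕ → V := fun n => (h (st n).1 (st n).2).choose with hs
  have hstate : ∀ n, gameState m x s n = (st n).1 := by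
    intro n
    induction n with
    | zero => rfl
    | succ k ih =>
      show fire m (gameState m x s k) (s k) = _
      rw [ih]
      rfl
  exact ⟨s, fun n => by rw [hstate n]; exact (h (st n).1 (st n).2).choose_spec.1⟩

lemma exists_active_of_deg (m : V → V → ℕ) (y : V → ℤ)
    (h : ∑ v, (outdeg m v - 1) < degSum y) : ∃ v, outdeg m v ≤ y v := by
  by_contra hc
  push_neg at hc
  have h2 : degSum y ≤ ∑ v, (outdeg m v - 1) :=
    Finset.sum_le_sum fun v _ => by have := hc v; omega
  omega

lemma nonterm_of_deg (m : V → V → ℕ) (x : V → ℤ)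
    (h : ∑ v, (outdeg m v - 1) < degSum x) : ¬ Terminating m x := by
  refine build_infgame m (P := fun y => degSum y = degSum x) rfl (fun y hy => ?_)
  obtain ⟨v, hv⟩ := exists_active_of_deg m y (by rw [show (fun y => degSum y = degSum x) y from hy]; exact h)
  exact ⟨v, hv, by show degSum (fire m y v) = degSum x; rw [degSum_fire]; exact hy⟩

lemma gameState_lower (m : V → V → ℕ) (hl : Loopless m) {x : V → ℤ} {s : ℕ → V}
    (hs : InfGame m x s) : ∀ n v, min (x v) 0 ≤ gameState m x s n v := by
  intro n
  induction n with
  | zero => intro v; exact min_le_left _ _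
  | succ k ih =>
    intro v
    show min (x v) 0 ≤ fire m (gameState m x s k) (s k) v
    simp only [fire]
    by_cases h : v = s k
    · subst h
      have h1 := hs k
      have h2 : (m (s k) (s k) : ℤ) = 0 := by simp [hl (s k)]
      rw [if_pos rfl]
      have h3 := min_le_right (x (s k)) 0
      omega
    · rw [if_neg h]
      have h4 := ih v
      have h5 : (0:ℤ) ≤ (m (s k) v : ℤ) := Int.natCast_nonneg _
      omega

lemma exists_repeat (m : V → V → ℕ) (hl : Loopless m) {x : V → ℤ} {s : ℕ → V}
    (hs : InfGame m x s) :
    ∃ i j, i < j ∧ gameState m x s i = gameState m x s j := by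
  set l : ℤ := ∑ u, min (x u) 0 with hldef
  set hi : ℤ := degSum x - ((Fintype.card V - 1 : ℕ) : ℤ) * l with hhidef
  have hlv : ∀ v, l ≤ min (x v) 0 := by
    intro v
    rw [hldef, ← Finset.sum_erase_add _ _ (mem_univ v)]
    have : ∑ u ∈ univ.erase v, min (x u) 0 ≤ 0 :=
      Finset.sum_nonpos fun u _ => min_le_right _ _
    omega
  have hb : ∀ n v, gameState m x s n v ∈ Set.Icc l hi := by
    intro n v
    have hlow : ∀ u, l ≤ gameState m x s n u :=
      fun u => le_trans (hlv u) (gameState_lower m hl hs n u)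
    constructor
    · exact hlow v
    · have hsum : gameState m x s n v = degSum x - ∑ u ∈ univ.erase v, gameState m x s n u := by
        have := degSum_gameState m x s n
        rw [degSum] at this
        rw [← Finset.sum_erase_add _ _ (mem_univ v)] at this
        omega
      have hcard : ((univ.erase v).card : ℤ) * l ≤ ∑ u ∈ univ.erase v, gameState m x s n u := by
        have := Finset.card_nsmul_le_sum (univ.erase v) (gameState m x s n) l
          (fun u _ => hlow u)
        simpa [nsmul_eq_mul] using this
      have hce : (univ.erase v).card = Fintype.card V - 1 := by
        rw [Finset.card_erase_of_mem (mem_univ v), Finset.card_univ]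
      rw [hce] at hcard
      rw [hhidef, hsum]
      omega
  haveI : Finite (Set.Icc l hi) := (Set.finite_Icc l hi).to_subtype
  obtain ⟨i, j, hij, he⟩ := Finite.exists_ne_map_eq_of_infinite
    (fun n => (fun v => (⟨gameState m x s n v, hb n v⟩ : Set.Icc l hi)))
  have heq : gameState m x s i = gameState m x s j :=
    funext fun v => congrArg Subtype.val (congrFun he v)
  rcases lt_or_gt_of_ne hij with h | h
  · exact ⟨i, j, h, heq⟩
  · exact ⟨j, i, h, heq.symm⟩

lemma period_pos (m : V → V → ℕ) (hconn : StronglyConnected m) {σ : V → ℤ}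
    (h0 : ∀ v, 0 ≤ σ v) (hne : ∃ v, 0 < σ v) (hlap : lap m σ = 0) : ∀ v, 1 ≤ σ v := by
  obtain ⟨a, ha⟩ := hne
  have key : ∀ u, σ u = 0 → ∀ w, 0 < m w u → σ w = 0 := by
    intro u hu w hw
    have h1 : (∑ v, (m v u : ℤ) * σ v) = 0 := by
      have h2 := congrFun hlap u
      simp only [lap, Pi.zero_apply] at h2
      rw [hu, mul_zero, sub_zero] at h2
      exact h2
    have h3 := (Finset.sum_eq_zero_iff_of_nonneg
      (fun v _ => mul_nonneg (Int.natCast_nonneg _) (h0 v))).1 h1 w (mem_univ w)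
    have h4 : (0:ℤ) < (m w u : ℤ) := by exact_mod_cast hw
    exact by nlinarith [h0 w]
  intro v
  have : ∀ b, Relation.ReflTransGen (fun a b => 0 < m a b) a b → 1 ≤ σ b := by
    intro b hpath
    induction hpath with
    | refl => omega
    | @tail c d hcd hedge ih =>
      by_contra h'
      have hd0 : σ d = 0 := by have := h0 d; omega
      have := key d hd0 c hedge
      omega
  exact this v (hconn a v)

lemma loop_period (m : V → V → ℕ) (hl : Loopless m) (hconn : StronglyConnected m)
    {x : V → ℤ} {s : ℕ → V} (hs : InfGame m x s) :
    ∃ i j, i < j ∧ (∀ v, 1 ≤ cnt s j v - cnt s i v) ∧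
      lap m (fun v => cnt s j v - cnt s i v) = 0 := by
  obtain ⟨i, j, hij, heq⟩ := exists_repeat m hl hs
  set σ : V → ℤ := fun v => cnt s j v - cnt s i v with hσ
  have hlap : lap m σ = 0 := by
    have h1 := gameState_eq_cnt m x s i
    have h2 := gameState_eq_cnt m x s j
    rw [h1, h2] at heq
    have h3 : lap m (cnt s i) = lap m (cnt s j) := add_left_cancel heq
    rw [hσ, lap_sub]
    funext u
    rw [h3]
    simp
  have h0 : ∀ v, 0 ≤ σ v := fun v => by
    have := cnt_mono s (le_of_lt hij) v; simp [hσ]; omega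
  have hne : ∃ v, 0 < σ v := by
    by_contra hc
    push_neg at hc
    have hsum : ∑ v, σ v = (j : ℤ) - i := by
      rw [hσ]; rw [Finset.sum_sub_distrib, cnt_sum, cnt_sum]
    have : ∑ v, σ v ≤ 0 := Finset.sum_nonpos fun v _ => hc v
    omega
  exact ⟨i, j, hij, period_pos m hconn h0 hne hlap, hlap⟩

lemma exists_fire (m : V → V → ℕ) (hl : Loopless m) (hconn : StronglyConnected m)
    {x : V → ℤ} {s : ℕ → V} (hs : InfGame m x s) (v : V) : ∃ t, s t = v := by
  obtain ⟨i, j, hij, hpos, _⟩ := loop_period m hl hconn hs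
  have h1 : 1 ≤ cnt s j v := by have := hpos v; have := cnt_nonneg s i v; omega
  have h2 : 0 < ((Finset.range j).filter (fun k => s k = v)).card := by
    simp only [cnt] at h1; exact_mod_cast h1
  obtain ⟨k, hk⟩ := Finset.card_pos.1 h2
  exact ⟨k, (Finset.mem_filter.1 hk).2⟩

lemma exists_period (m : V → V → ℕ) [Nonempty V] (hl : Loopless m)
    (hconn : StronglyConnected m) :
    ∃ p : V → ℤ, (∀ v, 1 ≤ p v) ∧ lap m p = 0 := by
  have hnt : ¬ Terminating m (fun v => outdeg m v) := by
    apply nonterm_of_deg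
    rw [degSum]
    have : (0:ℤ) < (Fintype.card V : ℤ) := by
      exact_mod_cast Fintype.card_pos
    have hsplit : ∑ v, (outdeg m v - 1) = (∑ v : V, outdeg m v) - Fintype.card V := by
      rw [Finset.sum_sub_distrib]; simp [Finset.card_univ]
    omega
  rw [Terminating, not_not] at hnt
  obtain ⟨s, hs⟩ := hnt
  obtain ⟨i, j, hij, hpos, hlap⟩ := loop_period m hl hconn hs
  exact ⟨_, hpos, hlap⟩

lemma nonterm_delta (m : V → V → ℕ) (hl : Loopless m) (hconn : StronglyConnected m)
    {x : V → ℤ} (h : ¬ Terminating m x) (v : V) :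
    ¬ Terminating m (x + lap m (delta v)) := by
  rw [Terminating, not_not] at h ⊢
  obtain ⟨s, hs⟩ := h
  have hocc : ∃ t, s t = v := exists_fire m hl hconn hs v
  set t := Nat.find hocc with ht
  have hst : s t = v := Nat.find_spec hocc
  have hmin : ∀ k, k < t → s k ≠ v := fun k hk => Nat.find_min hocc hk
  set s' : ℕ → V := fun n => if n < t then s n else s (n+1) with hs'def
  refine ⟨s', ?_⟩
  have key : ∀ n, (n < t → gameState m (x + lap m (delta v)) s' n
      = gameState m x s n + lap m (delta v)) ∧
      (t ≤ n → gameState m (x + lap m (delta v)) s' n = gameState m x s (n+1)) := by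
    intro n
    induction n with
    | zero =>
      refine ⟨fun _ => rfl, fun h0 => ?_⟩
      have ht0 : t = 0 := Nat.le_zero.1 h0
      show x + lap m (delta v) = fire m x (s 0)
      rw [fire_eq, show s 0 = v from ht0 ▸ hst]
    | succ n ih =>
      constructor
      · intro hlt
        have hn : n < t := by omega
        show fire m (gameState m (x + lap m (delta v)) s' n) (s' n) = _
        have hsn : s' n = s n := if_pos hn
        rw [ih.1 hn, hsn, fire_eq,
          show gameState m x s (n+1) = fire m (gameState m x s n) (s n) from rfl, fire_eq]
        abel
      · intro hle
        rcases Nat.lt_or_ge n t with hn | hn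
        · have htn : t = n + 1 := by omega
          show fire m (gameState m (x + lap m (delta v)) s' n) (s' n) = gameState m x s (n+2)
          have hsn : s' n = s n := if_pos hn
          rw [ih.1 hn, hsn, fire_eq,
            show gameState m x s (n+2) = fire m (gameState m x s (n+1)) (s (n+1)) from rfl,
            show gameState m x s (n+1) = fire m (gameState m x s n) (s n) from rfl,
            fire_eq, fire_eq, show s (n+1) = v from htn ▸ hst]
          abel
        · show fire m (gameState m (x + lap m (delta v)) s' n) (s' n) = gameState m x s (n+2)
          have hsn : s' n = s (n+1) := if_neg (not_lt.2 hn)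
          rw [ih.2 hn, hsn]
          rfl
  intro n
  rcases Nat.lt_or_ge n t with hn | hn
  · have hgs := (key n).1 hn
    have hsv : s' n = s n := if_pos hn
    rw [hsv, hgs]
    have hne : s n ≠ v := hmin n hn
    have hld : lap m (delta v) (s n) = (m v (s n) : ℤ) := by
      rw [lap_delta, if_neg hne, sub_zero]
    have h0 : (0:ℤ) ≤ (m v (s n) : ℤ) := Int.natCast_nonneg _
    have h1 := hs n
    simp only [Pi.add_apply, hld]
    omega
  · have hgs := (key n).2 hn
    have hsv : s' n = s (n+1) := if_neg (not_lt.2 hn)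
    rw [hsv, hgs]
    exact hs (n+1)

lemma nonterm_add_lap_nonneg (m : V → V → ℕ) (hl : Loopless m) (hconn : StronglyConnected m) :
    ∀ (n : ℕ) (x z : V → ℤ), (∀ v, 0 ≤ z v) → degSum z ≤ n → ¬ Terminating m x →
      ¬ Terminating m (x + lap m z) := by
  intro n
  induction n with
  | zero =>
    intro x z hz hd h
    have hz0 : z = 0 := by
      have h1 : degSum z = 0 := le_antisymm (by exact_mod_cast hd)
        (Finset.sum_nonneg fun v _ => hz v)
      funext v
      exact (Finset.sum_eq_zero_iff_of_nonneg (fun v _ => hz v)).1 h1 v (mem_univ v)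
    rw [hz0, lap_zero, add_zero]
    exact h
  | succ n ih =>
    intro x z hz hd h
    by_cases hz0 : z = 0
    · rw [hz0, lap_zero, add_zero]; exact h
    · have hex : ∃ v, 0 < z v := by
        by_contra hc
        push_neg at hc
        exact hz0 (funext fun v => le_antisymm (hc v) (hz v))
      obtain ⟨v, hv⟩ := hex
      have h1 := nonterm_delta m hl hconn h v
      have hdd : degSum (delta v) = 1 := by
        simp [degSum, delta, Finset.sum_ite_eq' Finset.univ v (fun _ => (1:ℤ))]
      have h2 := ih (x + lap m (delta v)) (z - delta v)
        (fun u => by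
          simp only [Pi.sub_apply, delta]
          by_cases hh : u = v
          · rw [if_pos hh]; subst hh; omega
          · rw [if_neg hh]; have := hz u; omega)
        (by
          have hsub : degSum (z - delta v) = degSum z - 1 := by
            simp only [degSum, Pi.sub_apply, Finset.sum_sub_distrib]
            have := hdd
            simp only [degSum] at this
            omega
          omega)
        h1
      have he : (x + lap m (delta v)) + lap m (z - delta v) = x + lap m z := by
        have hzz : delta v + (z - delta v) = z := by abel
        rw [add_assoc, ← lap_add, hzz]
      rw [he] at h2
      exact h2

lemma nonterm_add_lap (m : V → V → ℕ) [Nonempty V] (hl : Loopless m)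
    (hconn : StronglyConnected m) {x : V → ℤ} (z : V → ℤ) (h : ¬ Terminating m x) :
    ¬ Terminating m (x + lap m z) := by
  obtain ⟨p, hp1, hp0⟩ := exists_period m hl hconn
  set k : ℤ := ∑ v, max (-(z v)) 0 with hk
  have hk0 : 0 ≤ k := Finset.sum_nonneg fun v _ => le_max_right _ _
  have hkv : ∀ v, -(z v) ≤ k := by
    intro v
    have h1 : max (-(z v)) 0 ≤ k :=
      Finset.single_le_sum (f := fun u => max (-(z u)) 0)
        (fun u _ => le_max_right _ _) (mem_univ v)
    exact le_trans (le_max_left _ _) h1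
  set z' : V → ℤ := fun v => z v + k * p v with hz'
  have hz'0 : ∀ v, 0 ≤ z' v := by
    intro v
    have h1 : k * 1 ≤ k * p v := mul_le_mul_of_nonneg_left (hp1 v) hk0
    have h2 := hkv v
    simp only [hz', mul_one] at *
    omega
  have hlapz : lap m z' = lap m z := by
    funext u
    have hpu : (∑ v, (m v u : ℤ) * p v) - outdeg m u * p u = 0 := by
      have := congrFun hp0 u
      simpa [lap] using this
    simp only [lap, hz']
    have e1 : ∑ v, (m v u : ℤ) * (z v + k * p v)
        = ∑ v, (m v u : ℤ) * z v + k * ∑ v, (m v u : ℤ) * p v := by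
      rw [Finset.mul_sum, ← Finset.sum_add_distrib]
      exact Finset.sum_congr rfl fun v _ => by ring
    rw [e1]
    linear_combination k * hpu
  have hfin := nonterm_add_lap_nonneg m hl hconn (degSum z').toNat x z' hz'0
    (Int.self_le_toNat _) h
  rw [hlapz] at hfin
  exact hfin

def Step (m : V → V → ℕ) (x y : V → ℤ) : Prop :=
  ∃ v, outdeg m v ≤ x v ∧ y = fire m x v

lemma reach_lap {m : V → V → ℕ} {x y : V → ℤ}
    (h : Relation.ReflTransGen (Step m) x y) : ∃ σ : V → ℤ, y = x + lap m σ := by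
  induction h with
  | refl => exact ⟨0, by rw [lap_zero, add_zero]⟩
  | tail hab hbc ih =>
    obtain ⟨σ, hσ⟩ := ih
    obtain ⟨v, _, hy⟩ := hbc
    exact ⟨σ + delta v, by rw [hy, hσ, fire_eq, lap_add, add_assoc]⟩

lemma exists_stable_of_term {m : V → V → ℕ} {x : V → ℤ} (h : Terminating m x) :
    ∃ y, Relation.ReflTransGen (Step m) x y ∧ ∀ v, y v < outdeg m v := by
  by_contra hc
  push_neg at hc
  refine absurd h (build_infgame m (P := Relation.ReflTransGen (Step m) x)
    Relation.ReflTransGen.refl (fun y hy => ?_))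
  obtain ⟨v, hv⟩ := hc y hy
  exact ⟨v, hv, hy.tail ⟨v, hv, rfl⟩⟩

theorem equieff_iff_term (m : V → V → ℕ) [Nonempty V] (hl : Loopless m)
    (hconn : StronglyConnected m) (h : V → ℤ) :
    EquiEffective m h ↔ Terminating m (fun v => outdeg m v - 1 - h v) := by
  constructor
  · rintro ⟨g, hg, z, hz⟩
    by_contra hnt
    have h2 := nonterm_add_lap m hl hconn z hnt
    have e : (fun v => outdeg m v - 1 - h v) + lap m z = fun v => outdeg m v - 1 - g v := by
      funext u
      have h3 := congrFun hz u
      simp only [Pi.add_apply] at h3 ⊢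
      omega
    rw [e] at h2
    refine h2 ?_
    rintro ⟨s, hs⟩
    have h4 := hs 0
    have h5 : (0:ℤ) ≤ g (s 0) := hg (s 0)
    simp only [gameState] at h4
    omega
  · intro ht
    obtain ⟨y, hr, hy⟩ := exists_stable_of_term ht
    obtain ⟨σ, hσ⟩ := reach_lap hr
    refine ⟨fun v => outdeg m v - 1 - y v, ?_, σ, ?_⟩
    · intro v
      have := hy v
      simp only [Pi.zero_apply]
      omega
    · funext u
      have h1 := congrFun hσ u
      simp only [Pi.add_apply] at h1 ⊢
      omega

end ChipFiringAux

/-- Duality between rank and dist: for any divisor `f` on a strongly connected digraph,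
`rank(f) = dist(d⁺ - 1 - f) - 1`. -/
theorem rank_eq_chipDist_sub_one
    {V : Type} [Fintype V] [DecidableEq V] [Nonempty V]
    (m : V → V → ℕ) (hloop : Loopless m) (hconn : StronglyConnected m)
    (f : V → ℤ) :
    divRank m f = (chipDist m (fun v => outdeg m v - 1 - f v) : ℤ) - 1 := by
  classical
  set x : V → ℤ := fun v => outdeg m v - 1 - f v with hx
  set B : Set ℕ := {n : ℕ | ∃ y : V → ℤ, 0 ≤ y ∧ degSum y = (n : ℤ) ∧ ¬ Terminating m (x + y)}
    with hB
  set A : Set ℤ := {d : ℤ | ∃ g : V → ℤ, 0 ≤ g ∧ degSum g - 1 = d ∧ ¬ EquiEffective m (f - g)}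
    with hA
  have hchip : chipDist m x = sInf B := rfl
  have hrank : divRank m f = sInf A := rfl
  have key : ∀ g : V → ℤ, (¬ EquiEffective m (f - g) ↔ ¬ Terminating m (x + g)) := by
    intro g
    have h1 := equieff_iff_term m hloop hconn (f - g)
    have e : (fun v => outdeg m v - 1 - (f - g) v) = x + g := by
      funext u
      simp only [hx, Pi.add_apply, Pi.sub_apply]
      ring
    rw [e] at h1
    exact not_congr h1
  have hBne : B.Nonempty := by
    set y : V → ℤ := fun v => max (outdeg m v - x v) 0 with hy
    have hy0 : ∀ v, 0 ≤ y v := fun v => le_max_right _ _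
    have hnt : ¬ Terminating m (x + y) := by
      apply nonterm_of_deg
      have h1 : ∑ v, outdeg m v ≤ degSum (x + y) := by
        apply Finset.sum_le_sum
        intro v _
        have h2 : outdeg m v - x v ≤ y v := le_max_left _ _
        simp only [Pi.add_apply]
        omega
      have h2 : ∑ v, (outdeg m v - 1) < ∑ v, outdeg m v := by
        apply Finset.sum_lt_sum_of_nonempty univ_nonempty
        intro i _
        omega
      omega
    have hyd : 0 ≤ degSum y := Finset.sum_nonneg fun v _ => hy0 v
    exact ⟨(degSum y).toNat, y, fun v => hy0 v,
      by rw [Int.toNat_of_nonneg hyd], hnt⟩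
  obtain ⟨y0, hy00, hy0d, hy0nt⟩ := Nat.sInf_mem hBne
  have hAy : (((sInf B : ℕ) : ℤ) - 1) ∈ A := by
    refine ⟨y0, hy00, by omega, (key y0).2 hy0nt⟩
  have hAbdd : BddBelow A := by
    refine ⟨-1, fun d hd => ?_⟩
    obtain ⟨g, hg, hdg, _⟩ := hd
    have h1 : 0 ≤ degSum g := Finset.sum_nonneg fun v _ => hg v
    omega
  have hAne : A.Nonempty := ⟨_, hAy⟩
  have h1 : sInf A ≤ ((sInf B : ℕ) : ℤ) - 1 := csInf_le hAbdd hAy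
  obtain ⟨g0, hg0, hg0d, hg0ne⟩ := Int.csInf_mem hAne hAbdd
  have hg0nt := (key g0).1 hg0ne
  have hg0deg : 0 ≤ degSum g0 := Finset.sum_nonneg fun v _ => hg0 v
  have hBg : (degSum g0).toNat ∈ B :=
    ⟨g0, hg0, by rw [Int.toNat_of_nonneg hg0deg], hg0nt⟩
  have h2 : sInf B ≤ (degSum g0).toNat := Nat.sInf_le hBg
  rw [hrank, hchip]
  omega
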